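/- (Sufficiency direction) If f : [0,∞) → [0,∞) is nondecreasing and concave, then for all 0 ≤ a₁ ≤ ⋯ ≤ aₙ and 0 ≤ b₁ ≤ ⋯ ≤ bₙ with a₁ + ⋯ + aₖ ≤ b₁ + ⋯ + bₖ for every k ≤ n, one has f(a₁) + ⋯ + f(aₖ) ≤ f(b₁) + ⋯ + f(bₖ) for every k ≤ n. -/

import Mathlib

/-- Secant slopes of a concave function through a fixed point are antitone. -/
lemma concave_secant_anti' {f : ℝ → ℝ} (hconc : ConcaveOn ℝ (Set.Ici (0 : ℝ)) f)
    {a x y : ℝ} (ha : a ∈ Set.Ici (0 : ℝ)) (hx : x ∈ Set.Ici (0 : ℝ))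
    (hy : y ∈ Set.Ici (0 : ℝ)) (hxa : x ≠ a) (hya : y ≠ a) (hxy : x ≤ y) :
    (f y - f a) / (y - a) ≤ (f x - f a) / (x - a) := by
  have key := hconc.neg.secant_mono ha hx hy hxa hya hxy
  simp only [Pi.neg_apply] at key
  have e1 : (-f x - -f a) / (x - a) = -((f x - f a) / (x - a)) := by ring
  have e2 : (-f y - -f a) / (y - a) = -((f y - f a) / (y - a)) := by ring
  rw [e1, e2] at key
  linarith

/-- General slope comparison: if `u ≤ u'`, `v ≤ v'` then the slope over `[u', v']`
is at most the slope over `[u, v]` for a concave function. -/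
lemma concave_slope_anti' {f : ℝ → ℝ} (hconc : ConcaveOn ℝ (Set.Ici (0 : ℝ)) f)
    {u v u' v' : ℝ} (hu : 0 ≤ u) (hu' : u ≤ u') (huv : u < v) (hv : v ≤ v')
    (hu'v' : u' < v') :
    (f v' - f u') / (v' - u') ≤ (f v - f u) / (v - u) := by
  have hv0 : (0:ℝ) ≤ v := le_of_lt (lt_of_le_of_lt hu huv)
  have hu'0 : (0:ℝ) ≤ u' := hu.trans hu'
  have hv'0 : (0:ℝ) ≤ v' := hv0.trans hv
  have huv' : u < v' := lt_of_lt_of_le huv hv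
  have step1 : (f v' - f u) / (v' - u) ≤ (f v - f u) / (v - u) :=
    concave_secant_anti' hconc hu hv0 hv'0 (ne_of_gt huv) (ne_of_gt huv') hv
  have step2 : (f v' - f u') / (v' - u') ≤ (f v' - f u) / (v' - u) := by
    have key := concave_secant_anti' hconc hv'0 hu hu'0 (ne_of_lt huv')
      (ne_of_lt hu'v') hu'
    have e1 : (f u - f v') / (u - v') = (f v' - f u) / (v' - u) := by
      rw [← neg_div_neg_eq]; ring_nf
    have e2 : (f u' - f v') / (u' - v') = (f v' - f u') / (v' - u') := by
      rw [← neg_div_neg_eq]; ring_nf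
    rw [e1, e2] at key
    exact key
  linarith

/-- Abel-summation type inequality: if `s` is nonincreasing and nonnegative and the
partial sums of `d` are nonnegative, then `∑ s i * d i` dominates `c * ∑ d i`
for every lower bound `c` of `s`. -/
lemma abel_lower_bound' (s d : ℕ → ℝ) :
    ∀ k : ℕ, (∀ i j, i ≤ j → j < k → s j ≤ s i) → (∀ i, i < k → 0 ≤ s i) →
    (∀ j, j ≤ k → 0 ≤ ∑ i ∈ Finset.range j, d i) →
    ∀ c, 0 ≤ c → (∀ i, i < k → c ≤ s i) →
    c * ∑ i ∈ Finset.range k, d i ≤ ∑ i ∈ Finset.range k, s i * d i := by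
  intro k
  induction k with
  | zero => simp
  | succ k ih =>
    intro hs hs0 hd c hc hcs
    have h1 := ih (fun i j hij hj => hs i j hij (hj.trans (Nat.lt_succ_self k)))
      (fun i hi => hs0 i (hi.trans (Nat.lt_succ_self k)))
      (fun j hj => hd j (hj.trans (Nat.le_succ k)))
      (s k) (hs0 k (Nat.lt_succ_self k))
      (fun i hi => hs i k (Nat.le_of_lt hi) (Nat.lt_succ_self k))
    have hD : 0 ≤ ∑ i ∈ Finset.range (k+1), d i := hd (k+1) le_rfl
    have hcsk : c ≤ s k := hcs k (Nat.lt_succ_self k)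
    rw [Finset.sum_range_succ] at hD ⊢
    rw [Finset.sum_range_succ (f := fun i => s i * d i)]
    nlinarith [mul_nonneg (sub_nonneg.mpr hcsk) hD]

/-- Transitive monotonicity from consecutive monotonicity on an initial segment. -/
lemma mono_from_succ' {c : ℕ → ℝ} {n : ℕ} (h : ∀ i, i + 1 < n → c i ≤ c (i + 1)) :
    ∀ i j, i ≤ j → j < n → c i ≤ c j := by
  intro i j hij
  induction j, hij using Nat.le_induction with
  | base => intro _; exact le_refl _
  | succ j hij ih =>
    intro hjn
    exact le_trans (ih (lt_trans (Nat.lt_succ_self j) hjn)) (h j hjn)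

/-- sufficiency: if `f : [0,∞) → [0,∞)` is nondecreasing and
concave, partial-sum domination of nondecreasing nonnegative sequences is
preserved by applying `f` termwise. -/
theorem concave_preserves_majorization (f : ℝ → ℝ)
    (hmono : MonotoneOn f (Set.Ici (0 : ℝ)))
    (hconc : ConcaveOn ℝ (Set.Ici (0 : ℝ)) f)
    (hpos : ∀ x : ℝ, 0 ≤ x → 0 ≤ f x)
    (n : ℕ) (a b : ℕ → ℝ)
    (ha0 : ∀ i, i < n → 0 ≤ a i) (hb0 : ∀ i, i < n → 0 ≤ b i)
    (hamono : ∀ i, i + 1 < n → a i ≤ a (i + 1))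
    (hbmono : ∀ i, i + 1 < n → b i ≤ b (i + 1))
    (hsum : ∀ k, k ≤ n → ∑ i ∈ Finset.range k, a i ≤ ∑ i ∈ Finset.range k, b i) :
    ∀ k, k ≤ n → ∑ i ∈ Finset.range k, f (a i) ≤ ∑ i ∈ Finset.range k, f (b i) := by
  intro k hk
  -- min / max of the two sequences
  set m : ℕ → ℝ := fun i => min (a i) (b i) with hm
  set M : ℕ → ℝ := fun i => max (a i) (b i) with hM
  have hale : ∀ i j, i ≤ j → j < n → a i ≤ a j := mono_from_succ' hamono
  have hble : ∀ i j, i ≤ j → j < n → b i ≤ b j := mono_from_succ' hbmono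
  have hmle : ∀ i j, i ≤ j → j < n → m i ≤ m j := fun i j hij hj =>
    min_le_min (hale i j hij hj) (hble i j hij hj)
  have hMle : ∀ i j, i ≤ j → j < n → M i ≤ M j := fun i j hij hj =>
    max_le_max (hale i j hij hj) (hble i j hij hj)
  have hm0 : ∀ i, i < n → 0 ≤ m i := fun i hi => le_min (ha0 i hi) (hb0 i hi)
  have hmM : ∀ i, m i ≤ M i := fun i => min_le_max
  -- a positive ε smaller than every nontrivial gap `M i - m i`, `i < k`
  set T : Finset ℕ := (Finset.range k).filter (fun i => m i < M i) with hT
  set ε : ℝ := if h : T.Nonempty then T.inf' h (fun i => M i - m i) else 1 with hε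
  have hεpos : 0 < ε := by
    rw [hε]
    split
    · next h =>
      rw [Finset.lt_inf'_iff]
      intro i hi
      simp only [hT, Finset.mem_filter] at hi
      linarith [hi.2]
    · norm_num
  have hεle : ∀ i, i < k → m i < M i → ε ≤ M i - m i := by
    intro i hik hlt
    have hiT : i ∈ T := by
      simp only [hT, Finset.mem_filter, Finset.mem_range]; exact ⟨hik, hlt⟩
    rw [hε]
    rw [dif_pos ⟨i, hiT⟩]
    exact Finset.inf'_le _ hiT
  -- endpoints of the secant segments
  set u : ℕ → ℝ := fun i => m i with hu
  set v : ℕ → ℝ := fun i => if m i < M i then M i else m i + ε with hv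
  set s : ℕ → ℝ := fun i => (f (v i) - f (u i)) / (v i - u i) with hs
  have huv : ∀ i, u i < v i := by
    intro i
    simp only [hu, hv]
    split
    · next h => exact h
    · next h => linarith
  have hu0 : ∀ i, i < k → 0 ≤ u i := fun i hi => hm0 i (lt_of_lt_of_le hi hk)
  have hv0 : ∀ i, i < k → 0 ≤ v i := fun i hi => le_of_lt (lt_of_le_of_lt (hu0 i hi) (huv i))
  have humono : ∀ i j, i ≤ j → j < k → u i ≤ u j := fun i j hij hj =>
    hmle i j hij (lt_of_lt_of_le hj hk)
  have hvmono : ∀ i j, i ≤ j → j < k → v i ≤ v j := by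
    intro i j hij hjk
    have hjn : j < n := lt_of_lt_of_le hjk hk
    have hin : i < n := lt_of_le_of_lt hij hjn
    have h1 : m i ≤ m j := hmle i j hij hjn
    have h2 : M i ≤ M j := hMle i j hij hjn
    simp only [hv]
    split
    · next hi =>
      split
      · next hj => exact h2
      · next hj =>
        have : M j ≤ m j := not_lt.mp hj
        linarith
    · next hi =>
      split
      · next hj =>
        have := hεle j hjk hj
        linarith
      · next hj => linarith
  -- the slopes are nonincreasing
  have hsmono : ∀ i j, i ≤ j → j < k → s j ≤ s i := by
    intro i j hij hjk
    have hik : i < k := lt_of_le_of_lt hij hjk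
    exact concave_slope_anti' hconc (hu0 i hik) (humono i j hij hjk) (huv i)
      (hvmono i j hij hjk) (huv j)
  -- the slopes are nonnegative
  have hs0 : ∀ i, i < k → 0 ≤ s i := by
    intro i hik
    have h1 : f (u i) ≤ f (v i) :=
      hmono (hu0 i hik) (hv0 i hik) (le_of_lt (huv i))
    have h2 : (0:ℝ) < v i - u i := sub_pos.mpr (huv i)
    exact div_nonneg (by linarith) (le_of_lt h2)
  -- each difference `f (b i) - f (a i)` equals `s i * (b i - a i)`
  have hkey : ∀ i, i < k → f (b i) - f (a i) = s i * (b i - a i) := by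
    intro i hik
    rcases lt_trichotomy (a i) (b i) with hab | hab | hab
    · have hmi : m i = a i := min_eq_left (le_of_lt hab)
      have hMi : M i = b i := max_eq_right (le_of_lt hab)
      have hlt : m i < M i := by rw [hmi, hMi]; exact hab
      have hvi : v i = b i := by simp only [hv]; rw [if_pos hlt]; exact hMi
      have hui : u i = a i := hmi
      simp only [hs, hvi, hui]
      have hne : b i - a i ≠ 0 := by linarith
      rw [div_mul_cancel₀ _ hne]
    · rw [hab]; simp only [hab, sub_self, mul_zero]
    · have hmi : m i = b i := min_eq_right (le_of_lt hab)
      have hMi : M i = a i := max_eq_left (le_of_lt hab)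
      have hlt : m i < M i := by rw [hmi, hMi]; exact hab
      have hvi : v i = a i := by simp only [hv]; rw [if_pos hlt]; exact hMi
      have hui : u i = b i := hmi
      simp only [hs, hvi, hui]
      have hne : a i - b i ≠ 0 := by linarith
      rw [div_mul_eq_mul_div, eq_div_iff hne]
      ring
  -- partial sums of `d i = b i - a i` are nonnegative
  have hd : ∀ j, j ≤ k → 0 ≤ ∑ i ∈ Finset.range j, (b i - a i) := by
    intro j hjk
    rw [Finset.sum_sub_distrib]
    have := hsum j (hjk.trans hk)
    linarith
  have habel := abel_lower_bound' s (fun i => b i - a i) k hsmono hs0 hd 0 le_rfl hs0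
  rw [zero_mul] at habel
  have heq : ∑ i ∈ Finset.range k, (f (b i) - f (a i))
      = ∑ i ∈ Finset.range k, s i * (b i - a i) :=
    Finset.sum_congr rfl (fun i hi => hkey i (Finset.mem_range.mp hi))
  rw [Finset.sum_sub_distrib] at heq
  linarith
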